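/- arXiv:1407.7604 — 3 statements merged into one kernel-verified Lean document; each statement's English description precedes it below -/
import Mathlib

section
/- Let G be a finite simple connected graph with maximum degree at most 4, not isomorphic to C_{2,5}, such that ν_s(G) < n(G)/9 and every induced subgraph G' of G on a proper subset of the vertices satisfies ν_s(G') ≥ (n(G') − i(G'))/9. Then every vertex of G that is adjacent to a vertex of degree 1 has degree 4. -/
open SimpleGraph

/-- An induced matching of a simple graph `G`: a set of edges of `G` such that no two
distinct edges share an endpoint, and no edge of `G` joins an endpoint of one edge of
the matching to an endpoint of another. -/
def IsInducedMatching {V : Type*} (G : SimpleGraph V) (M : Finset (Sym2 V)) : Prop :=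
  (↑M : Set (Sym2 V)) ⊆ G.edgeSet ∧
    ∀ e ∈ M, ∀ f ∈ M, e ≠ f → ∀ a ∈ e, ∀ b ∈ f, a ≠ b ∧ ¬ G.Adj a b

/-- The strong matching number `ν_s(G)`: the maximum size of an induced matching of `G`. -/
noncomputable def strongMatchingNumber {V : Type*} [Fintype V] (G : SimpleGraph V) : ℕ :=
  sSup {n : ℕ | ∃ M : Finset (Sym2 V), IsInducedMatching G M ∧ M.card = n}

/-- The number of isolated vertices of `G`. -/
noncomputable def isolatedCount {V : Type*} [Fintype V] (G : SimpleGraph V) : ℕ :=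
  Set.ncard {v : V | ∀ w, ¬ G.Adj v w}

/-- The graph `C_{2,5}` obtained from the 5-cycle by replacing each vertex with two
nonadjacent vertices; two vertices in different pairs are adjacent iff the corresponding
vertices of `C_5` are adjacent. -/
def C25 : SimpleGraph (Fin 5 × Fin 2) where
  Adj x y := x.1 + 1 = y.1 ∨ y.1 + 1 = x.1
  symm := ⟨fun _ _ h => Or.symm h⟩
  loopless := ⟨by intro x; revert x; decide⟩

lemma le_smn {V : Type*} [Fintype V] (G : SimpleGraph V) (M : Finset (Sym2 V))
    (h : IsInducedMatching G M) : M.card ≤ strongMatchingNumber G := by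
  apply le_csSup
  · exact ⟨Fintype.card (Sym2 V), by rintro n ⟨N, -, rfl⟩; exact Finset.card_le_univ N⟩
  · exact ⟨M, h, rfl⟩

lemma smn_attained {V : Type*} [Fintype V] (G : SimpleGraph V) :
    ∃ M : Finset (Sym2 V), IsInducedMatching G M ∧ M.card = strongMatchingNumber G := by
  have : strongMatchingNumber G ∈
      {n : ℕ | ∃ M : Finset (Sym2 V), IsInducedMatching G M ∧ M.card = n} := by
    apply Nat.sSup_mem
    · exact ⟨0, ∅, ⟨by simp, by simp⟩, rfl⟩
    · exact ⟨Fintype.card (Sym2 V), by rintro n ⟨N, -, rfl⟩; exact Finset.card_le_univ N⟩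
  exact this

lemma walk_closed {V : Type*} (G : SimpleGraph V) (S : Set V)
    (hcl : ∀ a ∈ S, ∀ b, G.Adj a b → b ∈ S) :
    ∀ {a b : V} (_ : G.Walk a b), a ∈ S → b ∈ S := by
  intro a b p
  induction p with
  | nil => exact id
  | cons h p ih => intro ha; exact ih (hcl _ ha _ h)

lemma smn_induce_add_one {V : Type*} [Fintype V] (G : SimpleGraph V) (s : Set V)
    [Fintype ↥s] (u v : V)
    (huv : G.Adj u v) (hu : u ∉ s) (hv : v ∉ s)
    (hnu : ∀ a ∈ s, ¬ G.Adj u a) (hnv : ∀ a ∈ s, ¬ G.Adj v a) :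
    strongMatchingNumber (G.induce s) + 1 ≤ strongMatchingNumber G := by
  classical
  obtain ⟨M', hM', hcard⟩ := smn_attained (G.induce s)
  set f : Sym2 ↥s ↪ Sym2 V :=
    ⟨Sym2.map Subtype.val, Sym2.map.injective Subtype.val_injective⟩ with hf
  have hmem_s : ∀ e ∈ M'.map f, ∀ a ∈ e, a ∈ s := by
    intro e he a ha
    obtain ⟨e', he', rfl⟩ := Finset.mem_map.mp he
    obtain ⟨b, -, rfl⟩ := Sym2.mem_map.mp ha
    exact b.2
  have hedge : ∀ e ∈ M'.map f, e ∈ G.edgeSet := by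
    intro e he
    obtain ⟨e', he', rfl⟩ := Finset.mem_map.mp he
    induction e' using Sym2.ind with
    | _ a b =>
      have : (G.induce s).Adj a b := hM'.1 he'
      exact this
  have hpair : ∀ e ∈ M'.map f, ∀ g ∈ M'.map f, e ≠ g →
      ∀ a ∈ e, ∀ b ∈ g, a ≠ b ∧ ¬ G.Adj a b := by
    intro e he g hg hne a ha b hb
    obtain ⟨e', he', rfl⟩ := Finset.mem_map.mp he
    obtain ⟨g', hg', rfl⟩ := Finset.mem_map.mp hg
    have hne' : e' ≠ g' := fun h => hne (by rw [h])
    obtain ⟨a', ha', rfl⟩ := Sym2.mem_map.mp ha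
    obtain ⟨b', hb', rfl⟩ := Sym2.mem_map.mp hb
    obtain ⟨h1, h2⟩ := hM'.2 e' he' g' hg' hne' a' ha' b' hb'
    exact ⟨fun h => h1 (Subtype.val_injective h), h2⟩
  set M : Finset (Sym2 V) := insert s(u, v) (M'.map f) with hM
  have huv_not : s(u, v) ∉ M'.map f := by
    intro h
    exact hu (hmem_s _ h u (by simp))
  have hcardM : M.card = M'.card + 1 := by
    rw [hM, Finset.card_insert_of_notMem huv_not, Finset.card_map]
  have hMomatch : IsInducedMatching G M := by
    constructor
    · intro e he
      rcases Finset.mem_insert.mp he with h | h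
      · subst h; exact huv
      · exact hedge e h
    · intro e he g hg hne a ha b hb
      rcases Finset.mem_insert.mp he with he1 | he1 <;>
        rcases Finset.mem_insert.mp hg with hg1 | hg1
      · exact absurd (he1.trans hg1.symm) hne
      · subst he1
        have hbs : b ∈ s := hmem_s g hg1 b hb
        rcases Sym2.mem_iff.mp ha with rfl | rfl
        · exact ⟨fun h => hu (h ▸ hbs), hnu b hbs⟩
        · exact ⟨fun h => hv (h ▸ hbs), hnv b hbs⟩
      · subst hg1
        have has : a ∈ s := hmem_s e he1 a ha
        rcases Sym2.mem_iff.mp hb with rfl | rfl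
        · exact ⟨fun h => hu (h ▸ has), fun h => hnu a has h.symm⟩
        · exact ⟨fun h => hv (h ▸ has), fun h => hnv a has h.symm⟩
      · exact hpair e he1 g hg1 hne a ha b hb
  have := le_smn G M hMomatch
  rw [hcardM, hcard] at this
  exact this

lemma isolatedCount_induce_eq {V : Type*} [Fintype V] (G : SimpleGraph V)
    [DecidableRel G.Adj] (s : Finset V) :
    isolatedCount (G.induce (↑s : Set V)) =
      (s.filter (fun w => ∀ z ∈ s, ¬ G.Adj w z)).card := by
  classical
  have himg : Subtype.val '' {w : (↑s : Set V) | ∀ z, ¬ (G.induce (↑s : Set V)).Adj w z} =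
      (↑(s.filter (fun w => ∀ z ∈ s, ¬ G.Adj w z)) : Set V) := by
    ext z
    simp only [Set.mem_image, Set.mem_setOf_eq, Finset.coe_filter, Finset.mem_filter]
    constructor
    · rintro ⟨⟨w, hw⟩, h, rfl⟩
      refine ⟨by simpa using hw, fun z' hz' hadj => h ⟨z', by simp [hz']⟩ hadj⟩
    · rintro ⟨hz, h⟩
      exact ⟨⟨z, by simpa using hz⟩, fun z' hadj => h z' (by simpa using z'.2) hadj, rfl⟩
  have := Set.ncard_image_of_injective
    {w : (↑s : Set V) | ∀ z, ¬ (G.induce (↑s : Set V)).Adj w z} Subtype.val_injective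
  rw [himg] at this
  rw [isolatedCount, ← this, Set.ncard_coe_finset]
  exact congrArg Finset.card (by ext w; simp)

/-- Claim about a minimum counterexample to Theorem 1'. -/
theorem claim1_neighbor_of_endvertex_has_degree_four
    {V : Type*} [Fintype V] (G : SimpleGraph V) [DecidableRel G.Adj]
    (hconn : G.Connected) (hdeg : ∀ v, G.degree v ≤ 4)
    (hC25 : ¬ Nonempty (G ≃g C25))
    (hsmall : (strongMatchingNumber G : ℚ) < (Fintype.card V : ℚ) / 9)
    (hmin : ∀ s : Finset V, s ⊂ Finset.univ →
      ((s.card : ℚ) - (isolatedCount (G.induce (↑s : Set V)) : ℚ)) / 9 ≤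
        strongMatchingNumber (G.induce (↑s : Set V))) :
    ∀ u v : V, G.Adj u v → G.degree u = 1 → G.degree v = 4 := by
  classical
  intro u v huv hdegu
  by_contra hne4
  have hd3 : G.degree v ≤ 3 := by have := hdeg v; omega
  set d := G.degree v with hd
  set n := Fintype.card V with hn
  -- the neighborhood of u is exactly {v}
  have hNu : G.neighborFinset u = {v} := by
    have h1 : (G.neighborFinset u).card = 1 := hdegu
    obtain ⟨a, ha⟩ := Finset.card_eq_one.mp h1
    have hvmem : v ∈ G.neighborFinset u := (G.mem_neighborFinset u v).mpr huv
    rw [ha, Finset.mem_singleton] at hvmem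
    rw [ha, hvmem]
  have hadj_u : ∀ z, G.Adj u z → z = v := by
    intro z hz
    have := (G.mem_neighborFinset u z).mpr hz
    rw [hNu, Finset.mem_singleton] at this
    exact this
  set T : Finset V := insert v (G.neighborFinset v) with hT
  set s : Finset V := Finset.univ \ T with hs
  have hmem_s : ∀ a, a ∈ s ↔ (a ≠ v ∧ ¬ G.Adj v a) := by
    intro a
    simp [hs, hT, G.mem_neighborFinset, eq_comm]
  have hv_ns : v ∉ s := fun h => ((hmem_s v).mp h).1 rfl
  have hu_ns : u ∉ s := fun h => ((hmem_s u).mp h).2 huv.symm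
  have hssub : s ⊂ Finset.univ :=
    ⟨Finset.subset_univ s, fun h => hv_ns (h (Finset.mem_univ v))⟩
  have hnv' : ∀ a ∈ (↑s : Set V), ¬ G.Adj v a := by
    intro a ha
    exact ((hmem_s a).mp (by simpa using ha)).2
  have hnu' : ∀ a ∈ (↑s : Set V), ¬ G.Adj u a := by
    intro a ha hadj
    have : a = v := hadj_u a hadj
    subst this
    exact hv_ns (by simpa using ha)
  -- lift a maximum induced matching of G - N[v] and add uv
  have key : strongMatchingNumber (G.induce (↑s : Set V)) + 1 ≤ strongMatchingNumber G :=
    smn_induce_add_one G (↑s) u v huv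
      (by simpa using hu_ns) (by simpa using hv_ns) hnu' hnv'
  -- isolated vertices of G - N[v]
  set I : Finset V := s.filter (fun w => ∀ z ∈ s, ¬ G.Adj w z) with hI
  have hIcount : isolatedCount (G.induce (↑s : Set V)) = I.card := by
    rw [hI, isolatedCount_induce_eq G s]
    exact congrArg Finset.card (by ext w; simp)
  have hI_s : I ⊆ s := Finset.filter_subset _ _
  have hI_iso : ∀ w ∈ I, ∀ z ∈ s, ¬ G.Adj w z := by
    intro w hw
    exact (Finset.mem_filter.mp hw).2
  -- cardinalities
  have hTcard : T.card = d + 1 := by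
    rw [hT, Finset.card_insert_of_notMem (by simp), card_neighborFinset_eq_degree]
  have hscard : s.card + (d + 1) = n := by
    rw [hs, ← hTcard]
    exact Finset.card_sdiff_add_card_eq_card (Finset.subset_univ T)
  -- arithmetic: I.card + d ≥ 9
  have harith : 9 ≤ I.card + d := by
    by_contra hlt
    push_neg at hlt
    have h8 : (I.card : ℚ) + d ≤ 8 := by
      have : I.card + d ≤ 8 := by omega
      exact_mod_cast this
    have hm := hmin s hssub
    rw [hIcount] at hm
    have hk : ((strongMatchingNumber (G.induce (↑s : Set V)) : ℚ) + 1) ≤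
        strongMatchingNumber G := by exact_mod_cast key
    have hsc : (s.card : ℚ) + (d + 1) = n := by exact_mod_cast hscard
    linarith [hsmall]
  -- each isolated vertex has a neighbor in N(v) \ {u}
  have hIsub : I ⊆ ((G.neighborFinset v).erase u).biUnion
      (fun t => (G.neighborFinset t).erase v) := by
    intro w hw
    have hws : w ∈ s := hI_s hw
    have hwiso := hI_iso w hw
    have hwu : w ≠ u := fun h => hu_ns (h ▸ hws)
    obtain ⟨p⟩ := hconn.preconnected w u
    have hex : ∃ t, G.Adj w t := by
      cases p with
      | nil => exact absurd rfl hwu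
      | cons h q => exact ⟨_, h⟩
    obtain ⟨t, hwt⟩ := hex
    have hts : t ∉ s := fun h => hwiso t h hwt
    have ht' : t = v ∨ G.Adj v t := by
      by_contra hc
      push_neg at hc
      exact hts ((hmem_s t).mpr hc)
    have htv : G.Adj v t := by
      rcases ht' with rfl | h
      · exact absurd hwt.symm ((hmem_s w).mp hws).2
      · exact h
    have htu : t ≠ u := by
      rintro rfl
      exact ((hmem_s w).mp hws).1 (hadj_u w hwt.symm)
    refine Finset.mem_biUnion.mpr ⟨t, ?_, ?_⟩
    · exact Finset.mem_erase.mpr ⟨htu, (G.mem_neighborFinset v t).mpr htv⟩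
    · exact Finset.mem_erase.mpr ⟨((hmem_s w).mp hws).1, (G.mem_neighborFinset t w).mpr hwt.symm⟩
  have herase_card : ((G.neighborFinset v).erase u).card = d - 1 := by
    rw [Finset.card_erase_of_mem ((G.mem_neighborFinset v u).mpr huv.symm),
      card_neighborFinset_eq_degree]
  have hnbr3 : ∀ t, G.Adj v t → ((G.neighborFinset t).erase v).card ≤ 3 := by
    intro t htv
    rw [Finset.card_erase_of_mem ((G.mem_neighborFinset t v).mpr htv.symm),
      card_neighborFinset_eq_degree]
    have := hdeg t
    omega
  have hIbound : I.card ≤ 3 * (d - 1) := by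
    calc I.card ≤ (((G.neighborFinset v).erase u).biUnion
        (fun t => (G.neighborFinset t).erase v)).card := Finset.card_le_card hIsub
      _ ≤ ∑ t ∈ (G.neighborFinset v).erase u, ((G.neighborFinset t).erase v).card :=
        Finset.card_biUnion_le
      _ ≤ ((G.neighborFinset v).erase u).card * 3 := by
        apply Finset.sum_le_card_nsmul
        intro t ht
        exact hnbr3 t ((G.mem_neighborFinset v t).mp (Finset.mem_erase.mp ht).2)
      _ = 3 * (d - 1) := by rw [herase_card, Nat.mul_comm]
  have hd1 : 1 ≤ d := by
    have : u ∈ G.neighborFinset v := (G.mem_neighborFinset v u).mpr huv.symm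
    have := Finset.card_pos.mpr ⟨u, this⟩
    rw [card_neighborFinset_eq_degree] at this
    omega
  have hdeq : d = 3 := by omega
  have hI6 : I.card = 6 := by omega
  -- tight case: d = 3 and exactly six isolated vertices
  have hcard2 : ((G.neighborFinset v).erase u).card = 2 := by rw [herase_card]; omega
  obtain ⟨x, y, hxy, hxyeq⟩ := Finset.card_eq_two.mp hcard2
  have hx_mem : x ∈ (G.neighborFinset v).erase u := by rw [hxyeq]; simp
  have hy_mem : y ∈ (G.neighborFinset v).erase u := by rw [hxyeq]; simp
  have hvx : G.Adj v x := (G.mem_neighborFinset v x).mp (Finset.mem_erase.mp hx_mem).2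
  have hvy : G.Adj v y := (G.mem_neighborFinset v y).mp (Finset.mem_erase.mp hy_mem).2
  set A : Finset V := (G.neighborFinset x).erase v with hA
  set B : Finset V := (G.neighborFinset y).erase v with hB
  have hIAB : I ⊆ A ∪ B := by
    intro w hw
    have hbi := hIsub hw
    rw [hxyeq] at hbi
    obtain ⟨t, ht, hw'⟩ := Finset.mem_biUnion.mp hbi
    rcases Finset.mem_insert.mp ht with rfl | ht
    · exact Finset.mem_union_left _ hw'
    · rw [Finset.mem_singleton] at ht
      subst ht
      exact Finset.mem_union_right _ hw'
  have hAle : A.card ≤ 3 := hnbr3 x hvx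
  have hBle : B.card ≤ 3 := hnbr3 y hvy
  have hABcard : 6 ≤ (A ∪ B).card := hI6 ▸ Finset.card_le_card hIAB
  have hAB_le : (A ∪ B).card ≤ A.card + B.card := Finset.card_union_le A B
  have hIeq : I = A ∪ B := Finset.eq_of_subset_of_card_le hIAB (by omega)
  have hdisj : Disjoint A B := Finset.card_union_eq_card_add_card.mp (by omega)
  have hA_I : A ⊆ I := hIeq ▸ Finset.subset_union_left
  have hB_I : B ⊆ I := hIeq ▸ Finset.subset_union_right
  obtain ⟨w, hwA⟩ := Finset.card_pos.mp (by omega : 0 < A.card)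
  obtain ⟨w', hw'B⟩ := Finset.card_pos.mp (by omega : 0 < B.card)
  have hNxeq : G.neighborFinset x = insert v A :=
    (Finset.insert_erase ((G.mem_neighborFinset x v).mpr hvx.symm)).symm
  have hNyeq : G.neighborFinset y = insert v B :=
    (Finset.insert_erase ((G.mem_neighborFinset y v).mpr hvy.symm)).symm
  have hadj_x : ∀ z, G.Adj x z → z = v ∨ z ∈ A := by
    intro z hz
    have hzmem := (G.mem_neighborFinset x z).mpr hz
    rw [hNxeq] at hzmem
    simpa using hzmem
  have hadj_y : ∀ z, G.Adj y z → z = v ∨ z ∈ B := by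
    intro z hz
    have hzmem := (G.mem_neighborFinset y z).mpr hz
    rw [hNyeq] at hzmem
    simpa using hzmem
  have hws : w ∈ s := hI_s (hA_I hwA)
  have hw's : w' ∈ s := hI_s (hB_I hw'B)
  have hx_ns : x ∉ s := fun h => ((hmem_s x).mp h).2 hvx
  have hy_ns : y ∉ s := fun h => ((hmem_s y).mp h).2 hvy
  have hxw : G.Adj x w := (G.mem_neighborFinset x w).mp (Finset.mem_of_mem_erase hwA)
  have hyw' : G.Adj y w' := (G.mem_neighborFinset y w').mp (Finset.mem_of_mem_erase hw'B)
  have hxw' : x ≠ w' := fun h => hx_ns (h ▸ hw's)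
  have hwy : w ≠ y := fun h => hy_ns (h ▸ hws)
  have hww' : w ≠ w' := fun h => (Finset.disjoint_left.mp hdisj hwA) (h ▸ hw'B)
  have hnxy : ¬ G.Adj x y := by
    intro h
    rcases hadj_x y h with rfl | hyA
    · exact G.loopless.irrefl y hvy
    · exact hy_ns (hI_s (hA_I hyA))
  have hnxw' : ¬ G.Adj x w' := by
    intro h
    rcases hadj_x w' h with rfl | hA'
    · exact hv_ns hw's
    · exact (Finset.disjoint_left.mp hdisj hA') hw'B
  have hnyw : ¬ G.Adj y w := by
    intro h
    rcases hadj_y w h with rfl | hB'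
    · exact hv_ns hws
    · exact (Finset.disjoint_left.mp hdisj hwA) hB'
  have hnww' : ¬ G.Adj w w' := hI_iso w (hA_I hwA) w' hw's
  have he1ne2 : s(x, w) ≠ s(y, w') := by
    intro h
    rcases Sym2.eq_iff.mp h with ⟨h1, h2⟩ | ⟨h1, h2⟩
    · exact hxy h1
    · exact hxw' h1
  set M2 : Finset (Sym2 V) := {s(x, w), s(y, w')} with hM2
  have hM2card : M2.card = 2 := by
    rw [hM2, Finset.card_insert_of_notMem (by simpa using he1ne2), Finset.card_singleton]
  have hM2match : IsInducedMatching G M2 := by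
    constructor
    · intro e he
      simp only [hM2, Finset.coe_insert, Set.mem_insert_iff, Finset.coe_singleton,
        Set.mem_singleton_iff] at he
      rcases he with rfl | rfl
      · exact hxw
      · exact hyw'
    · intro e he f hf hnef a ha b hb
      simp only [hM2, Finset.mem_insert, Finset.mem_singleton] at he hf
      rcases he with rfl | rfl <;> rcases hf with rfl | rfl
      · exact absurd rfl hnef
      · rcases Sym2.mem_iff.mp ha with rfl | rfl <;> rcases Sym2.mem_iff.mp hb with rfl | rfl
        · exact ⟨hxy, hnxy⟩
        · exact ⟨hxw', hnxw'⟩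
        · exact ⟨hwy, fun h => hnyw h.symm⟩
        · exact ⟨hww', hnww'⟩
      · rcases Sym2.mem_iff.mp ha with rfl | rfl <;> rcases Sym2.mem_iff.mp hb with rfl | rfl
        · exact ⟨hxy.symm, fun h => hnxy h.symm⟩
        · exact ⟨hwy.symm, hnyw⟩
        · exact ⟨hxw'.symm, fun h => hnxw' h.symm⟩
        · exact ⟨hww'.symm, fun h => hnww' h.symm⟩
      · exact absurd rfl hnef
  have h2le : 2 ≤ strongMatchingNumber G := hM2card ▸ le_smn G M2 hM2match
  -- the whole graph has at most 10 vertices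
  set S0 : Finset V := insert u (insert v (insert x (insert y I))) with hS0
  have hNveq : G.neighborFinset v = insert u {x, y} := by
    rw [← Finset.insert_erase ((G.mem_neighborFinset v u).mpr huv.symm), hxyeq]
  have hNvb : ∀ b, G.Adj v b → b = u ∨ b = x ∨ b = y := by
    intro b hb
    have hbmem : b ∈ G.neighborFinset v := (G.mem_neighborFinset v b).mpr hb
    rw [hNveq] at hbmem
    simpa using hbmem
  have hS0closed : ∀ a ∈ (↑S0 : Set V), ∀ b, G.Adj a b → b ∈ (↑S0 : Set V) := by
    intro a ha b hab
    simp only [hS0, Finset.coe_insert, Set.mem_insert_iff, Finset.mem_coe] at ha ⊢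
    rcases ha with hau | hav | hax | hay | haI
    · subst hau
      right; left; exact hadj_u b hab
    · subst hav
      rcases hNvb b hab with rfl | rfl | rfl
      · left; rfl
      · right; right; left; rfl
      · right; right; right; left; rfl
    · subst hax
      rcases hadj_x b hab with rfl | hbA
      · right; left; rfl
      · exact Or.inr (Or.inr (Or.inr (Or.inr (hA_I hbA))))
    · subst hay
      rcases hadj_y b hab with rfl | hbB
      · right; left; rfl
      · exact Or.inr (Or.inr (Or.inr (Or.inr (hB_I hbB))))
    · by_cases hbs : b ∈ s
      · exact absurd hab (hI_iso a haI b hbs)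
      · have hb' : b = v ∨ G.Adj v b := by
          by_contra hc
          push_neg at hc
          exact hbs ((hmem_s b).mpr hc)
        rcases hb' with rfl | hvb
        · right; left; rfl
        · rcases hNvb b hvb with rfl | rfl | rfl
          · left; rfl
          · right; right; left; rfl
          · right; right; right; left; rfl
  have huniv : ∀ z : V, z ∈ S0 := by
    intro z
    have hvS0 : v ∈ (↑S0 : Set V) := by simp [hS0]
    obtain ⟨p⟩ := hconn.preconnected v z
    exact Finset.mem_coe.mp (walk_closed G (↑S0) hS0closed p hvS0)
  have hncard : n ≤ 10 := by
    have h1 : Finset.univ ⊆ S0 := fun z _ => huniv z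
    have c0 := Finset.card_le_card h1
    have c1 : S0.card ≤ (insert v (insert x (insert y I))).card + 1 := Finset.card_insert_le _ _
    have c2 : (insert v (insert x (insert y I))).card ≤ (insert x (insert y I)).card + 1 :=
      Finset.card_insert_le _ _
    have c3 : (insert x (insert y I)).card ≤ (insert y I).card + 1 := Finset.card_insert_le _ _
    have c4 : (insert y I).card ≤ I.card + 1 := Finset.card_insert_le _ _
    rw [Finset.card_univ] at c0
    omega
  have h2le' : (2 : ℚ) ≤ strongMatchingNumber G := by exact_mod_cast h2le
  have hn10 : (n : ℚ) ≤ 10 := by exact_mod_cast hncard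
  linarith [hsmall]
end

section
/- Let G be a finite simple connected graph with maximum degree at most 4, not isomorphic to C_{2,5}, such that ν_s(G) < n(G)/9 and every induced subgraph G' of G on a proper subset of the vertices satisfies ν_s(G') ≥ (n(G') − i(G'))/9. Then no two end-vertices of G are at graph distance exactly 4 from each other. -/
open SimpleGraph

namespace ClaimWork
open Finset

variable {V : Type*} [Fintype V] {G : SimpleGraph V}

omit [Fintype V] in
lemma empty_im : IsInducedMatching G (∅ : Finset (Sym2 V)) := by
  constructor
  · simp
  · intro e he; simp at he

lemma bdd_im : BddAbove {n : ℕ | ∃ M : Finset (Sym2 V), IsInducedMatching G M ∧ M.card = n} := by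
  refine ⟨Fintype.card (Sym2 V), ?_⟩
  rintro n ⟨M, _, rfl⟩
  exact Finset.card_le_univ M

lemma le_sMN (M : Finset (Sym2 V)) (hM : IsInducedMatching G M) :
    M.card ≤ strongMatchingNumber G :=
  le_csSup bdd_im ⟨M, hM, rfl⟩

lemma exists_opt (G : SimpleGraph V) :
    ∃ M : Finset (Sym2 V), IsInducedMatching G M ∧ M.card = strongMatchingNumber G :=
  Nat.sSup_mem (⟨0, ∅, empty_im, rfl⟩ :
    {n : ℕ | ∃ M : Finset (Sym2 V), IsInducedMatching G M ∧ M.card = n}.Nonempty) bdd_im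

omit [Fintype V] in
lemma sym2_exists_mem (e : Sym2 V) : ∃ x, x ∈ e := by
  induction e using Sym2.ind with
  | _ x y => exact ⟨x, by simp⟩

variable [DecidableEq V]

lemma extend (M₀ : Finset (Sym2 V)) (D : Finset V)
    (hIM : IsInducedMatching G M₀)
    (hPin : ∀ e ∈ M₀, ∀ x ∈ e, x ∈ D)
    (hP : ∀ e ∈ M₀, ∀ x ∈ e, ∀ z, G.Adj x z → z ∈ D) :
    M₀.card + strongMatchingNumber (G.induce ((↑(Finset.univ \ D) : Set V)))
      ≤ strongMatchingNumber G := by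
  classical
  set s : Finset V := Finset.univ \ D with hs
  obtain ⟨M', hM', hMc⟩ := exists_opt (G.induce (↑s : Set V))
  set Mi : Finset (Sym2 V) := M'.image (Sym2.map (Subtype.val : (↑s : Set V) → V)) with hMi
  have hnotD : ∀ e ∈ Mi, ∀ b ∈ e, b ∉ D := by
    intro e he b hb
    rw [hMi, mem_image] at he
    obtain ⟨e', he', rfl⟩ := he
    rw [Sym2.mem_map] at hb
    obtain ⟨a, _, rfl⟩ := hb
    have : (a : V) ∈ s := a.2
    exact (Finset.mem_sdiff.mp this).2
  have hadj : ∀ (x y : (↑s : Set V)), (G.induce (↑s : Set V)).Adj x y ↔ G.Adj x y := by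
    intro x y; rfl
  have cross : ∀ e ∈ M₀, ∀ f ∈ Mi, ∀ x ∈ e, ∀ y ∈ f, x ≠ y ∧ ¬ G.Adj x y := by
    intro e he f hf x hx y hy
    have hxD : x ∈ D := hPin e he x hx
    have hyD : y ∉ D := hnotD f hf y hy
    constructor
    · rintro rfl; exact hyD hxD
    · intro h; exact hyD (hP e he x hx y h)
  have hN : IsInducedMatching G (M₀ ∪ Mi) := by
    constructor
    · intro e he
      rw [Finset.mem_coe, mem_union] at he
      rcases he with he | he
      · exact hIM.1 he
      · rw [hMi, mem_image] at he
        obtain ⟨e', he', rfl⟩ := he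
        have := hM'.1 he'
        revert this
        induction e' using Sym2.ind with
        | _ x y =>
          intro h
          rw [Sym2.map_pair_eq]
          exact h
    · intro e he f hf hne x hx y hy
      rw [mem_union] at he hf
      rcases he with he | he <;> rcases hf with hf | hf
      · exact hIM.2 e he f hf hne x hx y hy
      · exact cross e he f hf x hx y hy
      · have h := cross f hf e he y hy x hx
        exact ⟨fun hxy => h.1 hxy.symm, fun hadj' => h.2 hadj'.symm⟩
      · rw [hMi, mem_image] at he hf
        obtain ⟨e', he', rfl⟩ := he
        obtain ⟨f', hf', rfl⟩ := hf
        have hne' : e' ≠ f' := by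
          rintro rfl; exact hne rfl
        rw [Sym2.mem_map] at hx hy
        obtain ⟨x', hx', rfl⟩ := hx
        obtain ⟨y', hy', rfl⟩ := hy
        have h := hM'.2 e' he' f' hf' hne' x' hx' y' hy'
        exact ⟨fun hxy => h.1 (Subtype.val_injective hxy), fun hadj' => h.2 hadj'⟩
  have hdisj : Disjoint M₀ Mi := by
    rw [Finset.disjoint_left]
    intro e he heMi
    obtain ⟨x, hx⟩ := sym2_exists_mem e
    exact hnotD e heMi x hx (hPin e he x hx)
  have hcard : (M₀ ∪ Mi).card = M₀.card + M'.card := by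
    rw [card_union_of_disjoint hdisj, hMi,
      Finset.card_image_of_injective _ (Sym2.map.injective Subtype.val_injective)]
  have := le_sMN (M₀ ∪ Mi) hN
  rw [hcard, hMc] at this
  exact this

lemma isoCount_eq (D I : Finset V)
    (hI : ∀ y, y ∈ I ↔ y ∉ D ∧ ∀ z, G.Adj y z → z ∈ D) :
    isolatedCount (G.induce ((↑(Finset.univ \ D) : Set V))) = I.card := by
  classical
  set s : Finset V := Finset.univ \ D with hs
  unfold isolatedCount
  have himg : Subtype.val '' {v : (↑s : Set V) | ∀ w, ¬ (G.induce (↑s : Set V)).Adj v w}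
      = (↑I : Set V) := by
    ext y
    constructor
    · rintro ⟨⟨y, hy⟩, hprop, rfl⟩
      simp only [Set.mem_setOf_eq] at hprop
      rw [Finset.mem_coe, hI]
      have hyD : y ∉ D := by
        have : y ∈ s := hy
        exact (Finset.mem_sdiff.mp this).2
      refine ⟨hyD, ?_⟩
      intro z hz
      by_contra hzD
      have hzs : z ∈ (↑s : Set V) := by
        rw [Finset.mem_coe, hs, mem_sdiff]; exact ⟨mem_univ z, hzD⟩
      exact hprop ⟨z, hzs⟩ hz
    · intro hy
      rw [Finset.mem_coe, hI] at hy
      have hys : y ∈ (↑s : Set V) := by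
        rw [Finset.mem_coe, hs, mem_sdiff]; exact ⟨mem_univ y, hy.1⟩
      refine ⟨⟨y, hys⟩, ?_, rfl⟩
      simp only [Set.mem_setOf_eq]
      intro w hw
      have : (w : V) ∈ D := hy.2 w hw
      have hws : (w : V) ∈ s := w.2
      exact (Finset.mem_sdiff.mp hws).2 this
  calc Set.ncard {v : (↑s : Set V) | ∀ w, ¬ (G.induce (↑s : Set V)).Adj v w}
      = (Subtype.val '' {v : (↑s : Set V) | ∀ w, ¬ (G.induce (↑s : Set V)).Adj v w}).ncard :=
        (Set.ncard_image_of_injective _ Subtype.val_injective).symm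
    _ = I.card := by rw [himg, Set.ncard_coe_finset]

lemma contra (hsmall : (strongMatchingNumber G : ℚ) < (Fintype.card V : ℚ) / 9)
    (hmin : ∀ s : Finset V, s ⊂ Finset.univ →
      ((s.card : ℚ) - (isolatedCount (G.induce (↑s : Set V)) : ℚ)) / 9 ≤
        strongMatchingNumber (G.induce (↑s : Set V)))
    (M₀ : Finset (Sym2 V)) (D : Finset V) (hD : D.Nonempty)
    (hIM : IsInducedMatching G M₀)
    (hPin : ∀ e ∈ M₀, ∀ x ∈ e, x ∈ D)
    (hP : ∀ e ∈ M₀, ∀ x ∈ e, ∀ z, G.Adj x z → z ∈ D)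
    (I : Finset V)
    (hI : ∀ y, y ∈ I ↔ y ∉ D ∧ ∀ z, G.Adj y z → z ∈ D)
    (hcount : D.card + I.card ≤ 9 * M₀.card) : False := by
  classical
  have hss : (Finset.univ \ D) ⊂ Finset.univ := by
    rw [Finset.ssubset_univ_iff]
    intro h
    obtain ⟨d, hd⟩ := hD
    have : d ∈ Finset.univ \ D := by rw [h]; exact mem_univ d
    exact (mem_sdiff.mp this).2 hd
  have hsc : (Finset.univ \ D).card + D.card = Fintype.card V := by
    have h1 := card_le_univ D
    rw [card_sdiff_of_subset (subset_univ D), card_univ] at *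
    omega
  have hkey := extend M₀ D hIM hPin hP
  have h2 := hmin (Finset.univ \ D) hss
  rw [isoCount_eq D I hI] at h2
  -- cast everything to ℚ
  have hkeyQ : (M₀.card : ℚ) + (strongMatchingNumber (G.induce ((↑(Finset.univ \ D) : Set V))) : ℚ)
      ≤ (strongMatchingNumber G : ℚ) := by exact_mod_cast hkey
  have hscQ : ((Finset.univ \ D).card : ℚ) + (D.card : ℚ) = (Fintype.card V : ℚ) := by
    exact_mod_cast hsc
  have hcountQ : (D.card : ℚ) + (I.card : ℚ) ≤ 9 * (M₀.card : ℚ) := by exact_mod_cast hcount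
  linarith

variable [DecidableRel G.Adj]

set_option linter.unusedSectionVars false in
lemma exists_adj (hconn : G.Connected) {x y : V} (h : x ≠ y) : ∃ z, G.Adj x z := by
  obtain ⟨p⟩ := hconn x y
  cases p with
  | nil => exact absurd rfl h
  | cons h q => exact ⟨_, h⟩

set_option linter.unusedSectionVars false in
lemma nbrF_singleton {u a : V} (hdeg : G.degree u = 1) (ha : G.Adj u a) :
    G.neighborFinset u = {a} := by
  obtain ⟨x, hx⟩ := card_eq_one.mp hdeg
  have haa : a ∈ G.neighborFinset u := (G.mem_neighborFinset u a).mpr ha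
  rw [hx, mem_singleton] at haa
  rw [hx, haa]

lemma adj_eq_of_deg_one {u a z : V} (hdeg : G.degree u = 1) (ha : G.Adj u a) (hz : G.Adj u z) :
    z = a := by
  have h1 := nbrF_singleton hdeg ha
  have h2 : z ∈ G.neighborFinset u := (G.mem_neighborFinset u z).mpr hz
  rw [h1, mem_singleton] at h2
  exact h2

set_option linter.unusedSectionVars false in
lemma pair_im {x1 y1 x2 y2 : V} (h1 : G.Adj x1 y1) (h2 : G.Adj x2 y2)
    (hx : ¬G.Adj x1 x2) (hxy : ¬ G.Adj x1 y2) (hyx : ¬ G.Adj y1 x2) (hyy : ¬ G.Adj y1 y2)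
    (nx : x1 ≠ x2) (nxy : x1 ≠ y2) (nyx : y1 ≠ x2) (nyy : y1 ≠ y2) :
    IsInducedMatching G {s(x1,y1), s(x2,y2)} := by
  constructor
  · intro e he
    simp only [Finset.coe_insert, Finset.coe_singleton, Set.mem_insert_iff,
      Set.mem_singleton_iff] at he
    rcases he with rfl | rfl
    · exact h1
    · exact h2
  · intro e he f hf hne x hxe y hyf
    simp only [Finset.mem_insert, Finset.mem_singleton] at he hf
    rcases he with rfl | rfl <;> rcases hf with rfl | rfl
    · exact absurd rfl hne
    · rw [Sym2.mem_iff] at hxe hyf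
      rcases hxe with rfl | rfl <;> rcases hyf with rfl | rfl
      · exact ⟨nx, hx⟩
      · exact ⟨nxy, hxy⟩
      · exact ⟨nyx, hyx⟩
      · exact ⟨nyy, hyy⟩
    · rw [Sym2.mem_iff] at hxe hyf
      rcases hxe with rfl | rfl <;> rcases hyf with rfl | rfl
      · exact ⟨nx.symm, fun h => hx h.symm⟩
      · exact ⟨nyx.symm, fun h => hyx h.symm⟩
      · exact ⟨nxy.symm, fun h => hxy h.symm⟩
      · exact ⟨nyy.symm, fun h => hyy h.symm⟩
    · exact absurd rfl hne

set_option linter.unusedSectionVars false in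
lemma single_im {x y : V} (h : G.Adj x y) : IsInducedMatching G {s(x,y)} := by
  constructor
  · intro e he
    simp only [Finset.coe_singleton, Set.mem_singleton_iff] at he
    rcases he with rfl
    exact h
  · intro e he f hf hne
    simp only [Finset.mem_singleton] at he hf
    subst he; subst hf
    exact absurd rfl hne

set_option linter.unusedSectionVars false in
lemma card_le_sub_one {s F : Finset V} {x : V} (hsF : s ⊆ F) (hxF : x ∈ F) (hxs : x ∉ s) :
    s.card + 1 ≤ F.card := by
  have h1 : s ⊆ F.erase x := Finset.subset_erase.mpr ⟨hsF, hxs⟩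
  have h2 := Finset.card_le_card h1
  have h3 : (F.erase x).card = F.card - 1 := Finset.card_erase_of_mem hxF
  have h4 : 1 ≤ F.card := Finset.card_pos.mpr ⟨x, hxF⟩
  omega

lemma beta (hconn : G.Connected) (hdeg : ∀ v, G.degree v ≤ 4)
    (hsmall : (strongMatchingNumber G : ℚ) < (Fintype.card V : ℚ) / 9)
    (hmin : ∀ s : Finset V, s ⊂ Finset.univ →
      ((s.card : ℚ) - (isolatedCount (G.induce (↑s : Set V)) : ℚ)) / 9 ≤
        strongMatchingNumber (G.induce (↑s : Set V)))
    {u₁ u₂ a : V} (h12 : u₁ ≠ u₂) (d1 : G.degree u₁ = 1) (d2 : G.degree u₂ = 1)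
    (a1 : G.Adj a u₁) (a2 : G.Adj a u₂) : False := by
  classical
  have n1 : G.neighborFinset u₁ = {a} := nbrF_singleton d1 a1.symm
  have n2 : G.neighborFinset u₂ = {a} := nbrF_singleton d2 a2.symm
  set D : Finset V := insert a (G.neighborFinset a) with hD
  have hnbrD : G.neighborFinset a ⊆ D := subset_insert _ _
  have haD : a ∈ D := mem_insert_self _ _
  have hu1D : u₁ ∈ D := hnbrD ((G.mem_neighborFinset _ _).mpr a1)
  have hu2D : u₂ ∈ D := hnbrD ((G.mem_neighborFinset _ _).mpr a2)
  have hDcard : D.card = G.degree a + 1 := by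
    rw [hD, card_insert_of_notMem (by simp)]
    rfl
  set I : Finset V := univ.filter (fun y => y ∉ D ∧ ∀ z, G.Adj y z → z ∈ D) with hIdef
  have hImem : ∀ y, y ∈ I ↔ (y ∉ D ∧ ∀ z, G.Adj y z → z ∈ D) := fun y => by
    rw [hIdef, mem_filter]; simp
  set T : Finset V := G.neighborFinset a \ {u₁, u₂} with hT
  have hTnbr : T ⊆ G.neighborFinset a := sdiff_subset
  have hu12sub : ({u₁, u₂} : Finset V) ⊆ G.neighborFinset a := by
    intro x hx
    rcases mem_insert.mp hx with rfl | hx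
    · exact (G.mem_neighborFinset _ _).mpr a1
    · rw [mem_singleton] at hx; subst hx
      exact (G.mem_neighborFinset _ _).mpr a2
  have hu12card : ({u₁, u₂} : Finset V).card = 2 := by
    rw [card_insert_of_notMem (by simp [h12]), card_singleton]
  have hTcard : T.card = G.degree a - 2 := by
    rw [hT, card_sdiff_of_subset hu12sub, hu12card]
    rfl
  have hWT : ∀ w ∈ I, ∀ z, G.Adj w z → z ∈ T := by
    intro w hw z hz
    rw [hImem] at hw
    have hzD := hw.2 z hz
    rw [hD, mem_insert] at hzD
    rcases hzD with rfl | hzn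
    · exact absurd (hnbrD ((G.mem_neighborFinset _ _).mpr hz.symm)) hw.1
    · rw [hT, mem_sdiff]
      refine ⟨hzn, ?_⟩
      intro hzu
      rcases mem_insert.mp hzu with heq | hzu
      · have hwm : w ∈ G.neighborFinset u₁ := (G.mem_neighborFinset _ _).mpr (heq ▸ hz).symm
        rw [n1, mem_singleton] at hwm
        subst hwm
        exact hw.1 haD
      · rw [mem_singleton] at hzu
        have hwm : w ∈ G.neighborFinset u₂ := (G.mem_neighborFinset _ _).mpr (hzu ▸ hz).symm
        rw [n2, mem_singleton] at hwm
        subst hwm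
        exact hw.1 haD
  have hWadj : ∀ w ∈ I, ∃ z, G.Adj w z := by
    intro w hw
    have : w ≠ u₁ := fun h => ((hImem w).mp hw).1 (h ▸ hu1D)
    exact exists_adj hconn this
  have hWmem : ∀ w ∈ I, ∃ t ∈ T, w ∈ G.neighborFinset t := by
    intro w hw
    obtain ⟨z, hz⟩ := hWadj w hw
    exact ⟨z, hWT w hw z hz, (G.mem_neighborFinset _ _).mpr hz.symm⟩
  have hIbiU : I ⊆ T.biUnion (fun t => G.neighborFinset t) := by
    intro w hw; rw [mem_biUnion]; exact hWmem w hw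
  have hIle : I.card ≤ T.card * 4 :=
    le_trans (card_le_card hIbiU) (card_biUnion_le_card_mul _ _ 4 (fun t _ => hdeg t))
  have hdega2 : 2 ≤ G.degree a := by
    have := card_le_card hu12sub
    rw [hu12card] at this
    exact this
  by_cases hc : D.card + I.card ≤ 9
  · refine contra hsmall hmin {s(a, u₁)} D ⟨a, haD⟩ (single_im a1) ?_ ?_ I hImem ?_
    · intro e he x hx
      rw [mem_singleton] at he; subst he
      rcases Sym2.mem_iff.mp hx with rfl | rfl
      · exact haD
      · exact hu1D
    · intro e he x hx z hz
      rw [mem_singleton] at he; subst he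
      rcases Sym2.mem_iff.mp hx with rfl | rfl
      · exact hnbrD ((G.mem_neighborFinset _ _).mpr hz)
      · rw [adj_eq_of_deg_one d1 a1.symm hz]; exact haD
    · simpa using hc
  · -- overflow case
    have h4a := hdeg a
    have hda4 : G.degree a = 4 := by
      rcases Nat.lt_or_ge (G.degree a) 4 with h | h
      · exfalso; omega
      · omega
    have hI5 : 5 ≤ I.card := by omega
    have hTc2 : T.card = 2 := by omega
    obtain ⟨t1, t2, ht12, hTeq⟩ := card_eq_two.mp hTc2
    have ht1T : t1 ∈ T := by rw [hTeq]; exact mem_insert_self _ _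
    have ht2T : t2 ∈ T := by rw [hTeq]; exact mem_insert_of_mem (mem_singleton_self _)
    have ht1n : t1 ∈ G.neighborFinset a := hTnbr ht1T
    have ht2n : t2 ∈ G.neighborFinset a := hTnbr ht2T
    have hat1 : G.Adj a t1 := (G.mem_neighborFinset _ _).mp ht1n
    have hat2 : G.Adj a t2 := (G.mem_neighborFinset _ _).mp ht2n
    have ht1D : t1 ∈ D := hnbrD ht1n
    have ht2D : t2 ∈ D := hnbrD ht2n
    have haI : a ∉ I := fun h => ((hImem a).mp h).1 haD
    have hant1 : a ∈ G.neighborFinset t1 := (G.mem_neighborFinset _ _).mpr hat1.symm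
    have hant2 : a ∈ G.neighborFinset t2 := (G.mem_neighborFinset _ _).mpr hat2.symm
    set m1 := (G.neighborFinset t1 ∩ I).card with hm1def
    set m2 := (G.neighborFinset t2 ∩ I).card with hm2def
    have hm1le : m1 + 1 ≤ G.degree t1 :=
      card_le_sub_one inter_subset_left hant1 (fun h => haI (mem_inter.mp h).2)
    have hm2le : m2 + 1 ≤ G.degree t2 :=
      card_le_sub_one inter_subset_left hant2 (fun h => haI (mem_inter.mp h).2)
    have hIsub2 : I ⊆ (G.neighborFinset t1 ∩ I) ∪ (G.neighborFinset t2 ∩ I) := by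
      intro w hw
      obtain ⟨t, htT, hwt⟩ := hWmem w hw
      rw [hTeq, mem_insert, mem_singleton] at htT
      rcases htT with rfl | rfl
      · exact mem_union_left _ (mem_inter.mpr ⟨hwt, hw⟩)
      · exact mem_union_right _ (mem_inter.mpr ⟨hwt, hw⟩)
    have hIm : I.card ≤ m1 + m2 :=
      le_trans (card_le_card hIsub2) (card_union_le _ _)
    have hdt1 := hdeg t1
    have hdt2 := hdeg t2
    have hm1ge2 : 2 ≤ m1 := by omega
    have hm2ge2 : 2 ≤ m2 := by omega
    have hnadj : ¬ G.Adj t1 t2 := by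
      intro hadj
      have hsub : (G.neighborFinset t1 ∩ I) ⊆ ((G.neighborFinset t1).erase a).erase t2 := by
        intro x hx
        have hxI := (mem_inter.mp hx).2
        have hxD : x ∉ D := ((hImem x).mp hxI).1
        rw [mem_erase, mem_erase]
        exact ⟨fun h => hxD (h ▸ ht2D), fun h => hxD (h ▸ haD), (mem_inter.mp hx).1⟩
      have hc1 := card_le_card hsub
      have he1 : (((G.neighborFinset t1).erase a).erase t2).card + 2 ≤ G.degree t1 := by
        have ht2m : t2 ∈ (G.neighborFinset t1).erase a :=
          mem_erase.mpr ⟨hat2.ne', (G.mem_neighborFinset _ _).mpr hadj⟩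
        have e1 := Finset.card_erase_of_mem ht2m
        have e2 := Finset.card_erase_of_mem hant1
        have hpos : 0 < (G.neighborFinset t1).card := card_pos.mpr ⟨a, hant1⟩
        have hpos2 : 0 < ((G.neighborFinset t1).erase a).card := card_pos.mpr ⟨t2, ht2m⟩
        have : ((G.neighborFinset t1).card) = G.degree t1 := rfl
        omega
      -- symmetric for t2
      have hsub2 : (G.neighborFinset t2 ∩ I) ⊆ ((G.neighborFinset t2).erase a).erase t1 := by
        intro x hx
        have hxI := (mem_inter.mp hx).2
        have hxD : x ∉ D := ((hImem x).mp hxI).1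
        rw [mem_erase, mem_erase]
        exact ⟨fun h => hxD (h ▸ ht1D), fun h => hxD (h ▸ haD), (mem_inter.mp hx).1⟩
      have hc2 := card_le_card hsub2
      have he2 : (((G.neighborFinset t2).erase a).erase t1).card + 2 ≤ G.degree t2 := by
        have ht1m : t1 ∈ (G.neighborFinset t2).erase a :=
          mem_erase.mpr ⟨hat1.ne', (G.mem_neighborFinset _ _).mpr hadj.symm⟩
        have e1 := Finset.card_erase_of_mem ht1m
        have e2 := Finset.card_erase_of_mem hant2
        have hpos : 0 < (G.neighborFinset t2).card := card_pos.mpr ⟨a, hant2⟩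
        have hpos2 : 0 < ((G.neighborFinset t2).erase a).card := card_pos.mpr ⟨t1, ht1m⟩
        have : ((G.neighborFinset t2).card) = G.degree t2 := rfl
        omega
      omega
    -- picks
    have hInter1 : (I ∩ G.neighborFinset t2).card = m2 := by rw [inter_comm]
    have hIsplit1 := Finset.card_inter_add_card_sdiff I (G.neighborFinset t2)
    have hw1ex : (I \ G.neighborFinset t2).Nonempty := by
      rw [← card_pos]
      omega
    obtain ⟨w1, hw1m⟩ := hw1ex
    rw [mem_sdiff] at hw1m
    have hw1I : w1 ∈ I := hw1m.1
    have hw1D : w1 ∉ D := ((hImem w1).mp hw1I).1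
    have hw1nt2 : ¬ G.Adj w1 t2 := fun h => hw1m.2 ((G.mem_neighborFinset _ _).mpr h.symm)
    have hw1t1 : G.Adj w1 t1 := by
      obtain ⟨z, hz⟩ := hWadj w1 hw1I
      have hzT := hWT w1 hw1I z hz
      rw [hTeq, mem_insert, mem_singleton] at hzT
      rcases hzT with rfl | rfl
      · exact hz
      · exact absurd hz hw1nt2
    have hInter2 : (I ∩ G.neighborFinset t1).card = m1 := by rw [inter_comm]
    have hIsplit2 := Finset.card_inter_add_card_sdiff I (G.neighborFinset t1)
    have hw2ex : (I \ G.neighborFinset t1).Nonempty := by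
      rw [← card_pos]
      omega
    obtain ⟨w2, hw2m⟩ := hw2ex
    rw [mem_sdiff] at hw2m
    have hw2I : w2 ∈ I := hw2m.1
    have hw2D : w2 ∉ D := ((hImem w2).mp hw2I).1
    have hw2nt1 : ¬ G.Adj w2 t1 := fun h => hw2m.2 ((G.mem_neighborFinset _ _).mpr h.symm)
    have hw2t2 : G.Adj w2 t2 := by
      obtain ⟨z, hz⟩ := hWadj w2 hw2I
      have hzT := hWT w2 hw2I z hz
      rw [hTeq, mem_insert, mem_singleton] at hzT
      rcases hzT with rfl | rfl
      · exact absurd hz hw2nt1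
      · exact hz
    have hw12 : w1 ≠ w2 := by
      intro h; subst h
      exact hw1nt2 hw2t2
    have hw1w2 : ¬ G.Adj w1 w2 := by
      intro h
      exact hw2D (hnbrD (hTnbr (hWT w1 hw1I w2 h)))
    -- the matching and deleted set
    set D2 : Finset V := (D ∪ G.neighborFinset t1) ∪ G.neighborFinset t2 with hD2
    have hDD2 : D ⊆ D2 := subset_union_left.trans subset_union_left
    have hn1D2 : G.neighborFinset t1 ⊆ D2 := subset_union_right.trans subset_union_left
    have hn2D2 : G.neighborFinset t2 ⊆ D2 := subset_union_right
    have hMIM : IsInducedMatching G {s(t1, w1), s(t2, w2)} := by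
      refine pair_im hw1t1.symm hw2t2.symm hnadj (fun h => hw2nt1 h.symm) ?_ hw1w2 ht12
        (fun h => hw2D (h ▸ ht1D)) (fun h => hw1D (h.symm ▸ ht2D)) hw12
      exact hw1nt2
    have hMne : s(t1, w1) ≠ s(t2, w2) := by
      intro h
      rcases Sym2.eq_iff.mp h with ⟨h1, _⟩ | ⟨h1, _⟩
      · exact ht12 h1
      · exact hw2D (h1 ▸ ht1D)
    have hMcard : ({s(t1, w1), s(t2, w2)} : Finset (Sym2 V)).card = 2 := by
      rw [card_insert_of_notMem (by rw [mem_singleton]; exact hMne), card_singleton]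
    set I2 : Finset V := univ.filter (fun y => y ∉ D2 ∧ ∀ z, G.Adj y z → z ∈ D2) with hI2def
    have hI2mem : ∀ y, y ∈ I2 ↔ (y ∉ D2 ∧ ∀ z, G.Adj y z → z ∈ D2) := fun y => by
      rw [hI2def, mem_filter]; simp
    -- counting
    set X1 : Finset V := G.neighborFinset t1 \ D with hX1
    set X2 : Finset V := G.neighborFinset t2 \ D with hX2
    have hD2sub : D2 ⊆ (D ∪ X1) ∪ X2 := by
      intro z hz
      rw [hD2, mem_union, mem_union] at hz
      by_cases hzD : z ∈ D
      · exact mem_union_left _ (mem_union_left _ hzD)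
      · rcases hz with (hz | hz) | hz
        · exact absurd hz hzD
        · exact mem_union_left _ (mem_union_right _ (mem_sdiff.mpr ⟨hz, hzD⟩))
        · exact mem_union_right _ (mem_sdiff.mpr ⟨hz, hzD⟩)
    have hD2card : D2.card ≤ D.card + X1.card + X2.card := by
      calc D2.card ≤ ((D ∪ X1) ∪ X2).card := card_le_card hD2sub
        _ ≤ (D ∪ X1).card + X2.card := card_union_le _ _
        _ ≤ D.card + X1.card + X2.card := by
            have := card_union_le D X1
            omega
    have hX1le : X1.card + 1 ≤ G.degree t1 :=
      card_le_sub_one sdiff_subset hant1 (fun h => (mem_sdiff.mp h).2 haD)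
    have hX2le : X2.card + 1 ≤ G.degree t2 :=
      card_le_sub_one sdiff_subset hant2 (fun h => (mem_sdiff.mp h).2 haD)
    have hX1I : X1 ∩ I = G.neighborFinset t1 ∩ I := by
      ext x
      rw [mem_inter, mem_inter, hX1, mem_sdiff]
      constructor
      · rintro ⟨⟨h1, _⟩, h2⟩; exact ⟨h1, h2⟩
      · rintro ⟨h1, h2⟩; exact ⟨⟨h1, ((hImem x).mp h2).1⟩, h2⟩
    have hX2I : X2 ∩ I = G.neighborFinset t2 ∩ I := by
      ext x
      rw [mem_inter, mem_inter, hX2, mem_sdiff]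
      constructor
      · rintro ⟨⟨h1, _⟩, h2⟩; exact ⟨h1, h2⟩
      · rintro ⟨h1, h2⟩; exact ⟨⟨h1, ((hImem x).mp h2).1⟩, h2⟩
    have hX1split := Finset.card_inter_add_card_sdiff X1 I
    have hX2split := Finset.card_inter_add_card_sdiff X2 I
    rw [hX1I, ← hm1def] at hX1split
    rw [hX2I, ← hm2def] at hX2split
    set Z : Finset V := (X1 ∪ X2) \ I with hZ
    have hZcard : Z.card ≤ (X1 \ I).card + (X2 \ I).card := by
      have hsub : Z ⊆ (X1 \ I) ∪ (X2 \ I) := by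
        intro z hz
        rw [hZ, mem_sdiff, mem_union] at hz
        rcases hz.1 with h | h
        · exact mem_union_left _ (mem_sdiff.mpr ⟨h, hz.2⟩)
        · exact mem_union_right _ (mem_sdiff.mpr ⟨h, hz.2⟩)
      exact le_trans (card_le_card hsub) (card_union_le _ _)
    have hI2sub : I2 ⊆ Z.biUnion (fun z => G.neighborFinset z \ {t1, t2}) := by
      intro y hy
      rw [hI2mem] at hy
      have hyD2 : y ∉ D2 := hy.1
      have hyD : y ∉ D := fun h => hyD2 (hDD2 h)
      have hyne : y ≠ u₁ := fun h => hyD (h ▸ hu1D)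
      obtain ⟨z, hz⟩ := exists_adj hconn hyne
      have hzD2 := hy.2 z hz
      -- analyze z
      have hzZ : z ∈ Z := by
        rw [hZ, mem_sdiff, mem_union]
        have hzD : z ∉ D := by
          intro hzD
          rw [hD, mem_insert] at hzD
          rcases hzD with rfl | hzn
          · exact hyD2 (hDD2 (hnbrD ((G.mem_neighborFinset _ _).mpr hz.symm)))
          · -- z ∈ nbrF a : z ∈ {u₁, u₂} or z ∈ T
            by_cases hzu : z ∈ ({u₁, u₂} : Finset V)
            · rcases mem_insert.mp hzu with heq | hzu2
              · have hwm : y ∈ G.neighborFinset u₁ := (G.mem_neighborFinset _ _).mpr (heq ▸ hz).symm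
                rw [n1, mem_singleton] at hwm
                exact hyD (hwm ▸ haD)
              · rw [mem_singleton] at hzu2
                have hwm : y ∈ G.neighborFinset u₂ := (G.mem_neighborFinset _ _).mpr (hzu2 ▸ hz).symm
                rw [n2, mem_singleton] at hwm
                exact hyD (hwm ▸ haD)
            · have hzT : z ∈ T := by rw [hT, mem_sdiff]; exact ⟨hzn, hzu⟩
              rw [hTeq, mem_insert, mem_singleton] at hzT
              rcases hzT with rfl | rfl
              · exact hyD2 (hn1D2 ((G.mem_neighborFinset _ _).mpr hz.symm))
              · exact hyD2 (hn2D2 ((G.mem_neighborFinset _ _).mpr hz.symm))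
        have hzI : z ∉ I := by
          intro hzI
          exact hyD (hnbrD (hTnbr (hWT z hzI y hz.symm)))
        refine ⟨?_, hzI⟩
        rw [hD2, mem_union, mem_union] at hzD2
        rcases hzD2 with (h | h) | h
        · exact absurd h hzD
        · exact Or.inl (mem_sdiff.mpr ⟨h, hzD⟩)
        · exact Or.inr (mem_sdiff.mpr ⟨h, hzD⟩)
      rw [mem_biUnion]
      refine ⟨z, hzZ, ?_⟩
      rw [mem_sdiff]
      refine ⟨(G.mem_neighborFinset _ _).mpr hz.symm, ?_⟩
      intro hmem
      rcases mem_insert.mp hmem with rfl | hmem2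
      · exact hyD2 (hDD2 ht1D)
      · rw [mem_singleton] at hmem2; subst hmem2
        exact hyD2 (hDD2 ht2D)
    have hI2card : I2.card ≤ Z.card * 3 := by
      refine le_trans (card_le_card hI2sub) (card_biUnion_le_card_mul _ _ 3 ?_)
      intro z hzZ
      rw [hZ, mem_sdiff, mem_union] at hzZ
      have : ∃ t, t ∈ G.neighborFinset z ∧ (t = t1 ∨ t = t2) := by
        rcases hzZ.1 with h | h
        · have := (mem_sdiff.mp h).1
          exact ⟨t1, (G.mem_neighborFinset _ _).mpr ((G.mem_neighborFinset _ _).mp this).symm, Or.inl rfl⟩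
        · have := (mem_sdiff.mp h).1
          exact ⟨t2, (G.mem_neighborFinset _ _).mpr ((G.mem_neighborFinset _ _).mp this).symm, Or.inr rfl⟩
      obtain ⟨t, htm, htor⟩ := this
      have hsub : G.neighborFinset z \ {t1, t2} ⊆ (G.neighborFinset z).erase t := by
        intro x hx
        rw [mem_sdiff] at hx
        rw [mem_erase]
        refine ⟨?_, hx.1⟩
        intro hxt; subst hxt
        rcases htor with rfl | rfl
        · exact hx.2 (mem_insert_self _ _)
        · exact hx.2 (mem_insert_of_mem (mem_singleton_self _))
      have h1 := card_le_card hsub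
      have h2 := Finset.card_erase_of_mem htm
      have h3 := hdeg z
      have : (G.neighborFinset z).card = G.degree z := rfl
      omega
    -- assemble
    have hfinal : D2.card + I2.card ≤ 18 := by omega
    refine contra hsmall hmin {s(t1, w1), s(t2, w2)} D2 ⟨a, hDD2 haD⟩ hMIM ?_ ?_ I2 hI2mem ?_
    · intro e he x hx
      rcases mem_insert.mp he with rfl | he2
      · rcases Sym2.mem_iff.mp hx with heq | heq <;> rw [heq]
        · exact hDD2 ht1D
        · exact hn1D2 ((G.mem_neighborFinset _ _).mpr hw1t1.symm)
      · rw [mem_singleton] at he2; subst he2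
        rcases Sym2.mem_iff.mp hx with heq | heq <;> rw [heq]
        · exact hDD2 ht2D
        · exact hn2D2 ((G.mem_neighborFinset _ _).mpr hw2t2.symm)
    · intro e he x hx z hz
      rcases mem_insert.mp he with rfl | he2
      · rcases Sym2.mem_iff.mp hx with heq | heq <;> rw [heq] at hz
        · exact hn1D2 ((G.mem_neighborFinset _ _).mpr hz)
        · exact hDD2 (hnbrD (hTnbr (hWT w1 hw1I z hz)))
      · rw [mem_singleton] at he2; subst he2
        rcases Sym2.mem_iff.mp hx with heq | heq <;> rw [heq] at hz
        · exact hn2D2 ((G.mem_neighborFinset _ _).mpr hz)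
        · exact hDD2 (hnbrD (hTnbr (hWT w2 hw2I z hz)))
    · rw [hMcard]
      omega

lemma delta (hconn : G.Connected) (hdeg : ∀ v, G.degree v ≤ 4)
    (hsmall : (strongMatchingNumber G : ℚ) < (Fintype.card V : ℚ) / 9)
    (hmin : ∀ s : Finset V, s ⊂ Finset.univ →
      ((s.card : ℚ) - (isolatedCount (G.induce (↑s : Set V)) : ℚ)) / 9 ≤
        strongMatchingNumber (G.induce (↑s : Set V)))
    {u₁ u₂ a b c : V}
    (d1 : G.degree u₁ = 1) (d2 : G.degree u₂ = 1)
    (h1 : G.Adj u₁ a) (h2 : G.Adj a b) (h3 : G.Adj b c) (h4 : G.Adj c u₂)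
    (hac : a ≠ c) (hnac : ¬ G.Adj a c)
    (h12 : u₁ ≠ u₂) (hu1c : u₁ ≠ c) (hau2 : a ≠ u₂) : False := by
  classical
  have n1 : G.neighborFinset u₁ = {a} := nbrF_singleton d1 h1
  have n2 : G.neighborFinset u₂ = {c} := nbrF_singleton d2 h4.symm
  set D : Finset V := insert a (G.neighborFinset a) ∪ insert c (G.neighborFinset c) with hD
  have hnaD : G.neighborFinset a ⊆ D := (subset_insert _ _).trans subset_union_left
  have hncD : G.neighborFinset c ⊆ D := (subset_insert _ _).trans subset_union_right
  have haD : a ∈ D := mem_union_left _ (mem_insert_self _ _)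
  have hcD : c ∈ D := mem_union_right _ (mem_insert_self _ _)
  have hu1D : u₁ ∈ D := hnaD ((G.mem_neighborFinset _ _).mpr h1.symm)
  have hu2D : u₂ ∈ D := hncD ((G.mem_neighborFinset _ _).mpr h4)
  have hbna : b ∈ G.neighborFinset a := (G.mem_neighborFinset _ _).mpr h2
  have hbnc : b ∈ G.neighborFinset c := (G.mem_neighborFinset _ _).mpr h3.symm
  have hbD : b ∈ D := hnaD hbna
  -- D.card ≤ 9
  have hDcard : D.card ≤ 9 := by
    show (insert a (G.neighborFinset a) ∪ insert c (G.neighborFinset c)).card ≤ 9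
    have hInter : 1 ≤ ((insert a (G.neighborFinset a)) ∩ (insert c (G.neighborFinset c))).card := by
      refine card_pos.mpr ⟨b, ?_⟩
      exact mem_inter.mpr ⟨mem_insert_of_mem hbna, mem_insert_of_mem hbnc⟩
    have hUI := Finset.card_union_add_card_inter (insert a (G.neighborFinset a))
      (insert c (G.neighborFinset c))
    have hca : (insert a (G.neighborFinset a)).card ≤ 5 := by
      have := card_insert_le a (G.neighborFinset a)
      have := hdeg a
      have hh : (G.neighborFinset a).card = G.degree a := rfl
      omega
    have hcc : (insert c (G.neighborFinset c)).card ≤ 5 := by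
      have := card_insert_le c (G.neighborFinset c)
      have := hdeg c
      have hh : (G.neighborFinset c).card = G.degree c := rfl
      omega
    omega
  -- quad
  have hu1a : u₁ ≠ a := h1.ne
  have hu2c : u₂ ≠ c := h4.ne'
  set Q : Finset V := {u₁, u₂, a, c} with hQ
  have hQD : Q ⊆ D := by
    intro x hx
    rw [hQ] at hx
    rcases mem_insert.mp hx with rfl | hx
    · exact hu1D
    rcases mem_insert.mp hx with rfl | hx
    · exact hu2D
    rcases mem_insert.mp hx with rfl | hx
    · exact haD
    rw [mem_singleton] at hx; subst hx
    exact hcD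
  have hQcard : Q.card = 4 := by
    rw [hQ]
    rw [card_insert_of_notMem (by simp [h12, hu1a, hu1c]),
        card_insert_of_notMem (by simp [Ne.symm hau2, hu2c]),
        card_insert_of_notMem (by simp [hac]), card_singleton]
  set T : Finset V := D \ Q with hT
  have hTcard : T.card = D.card - 4 := by rw [hT, card_sdiff_of_subset hQD, hQcard]
  have hQle : 4 ≤ D.card := by
    have := card_le_card hQD
    omega
  -- b ∈ T
  have hbu1 : b ≠ u₁ := by
    intro h; subst h
    have : c ∈ G.neighborFinset b := (G.mem_neighborFinset _ _).mpr h3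
    rw [n1, mem_singleton] at this
    exact hac this.symm
  have hbu2 : b ≠ u₂ := by
    intro h; subst h
    have : a ∈ G.neighborFinset b := (G.mem_neighborFinset _ _).mpr h2.symm
    rw [n2, mem_singleton] at this
    exact hac this
  have hbT : b ∈ T := by
    rw [hT, mem_sdiff, hQ]
    refine ⟨hbD, ?_⟩
    simp only [mem_insert, mem_singleton]
    push_neg
    exact ⟨hbu1, hbu2, h2.ne', h3.ne⟩
  set I : Finset V := univ.filter (fun y => y ∉ D ∧ ∀ z, G.Adj y z → z ∈ D) with hIdef
  have hImem : ∀ y, y ∈ I ↔ (y ∉ D ∧ ∀ z, G.Adj y z → z ∈ D) := fun y => by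
    rw [hIdef, mem_filter]; simp
  have hWT : ∀ w ∈ I, ∀ z, G.Adj w z → z ∈ T := by
    intro w hw z hz
    rw [hImem] at hw
    have hzD := hw.2 z hz
    rw [hT, mem_sdiff]
    refine ⟨hzD, ?_⟩
    rw [hQ]
    simp only [mem_insert, mem_singleton]
    push_neg
    refine ⟨?_, ?_, ?_, ?_⟩
    · intro h
      have hwm : w ∈ G.neighborFinset u₁ := (G.mem_neighborFinset _ _).mpr (h ▸ hz).symm
      rw [n1, mem_singleton] at hwm
      exact hw.1 (hwm ▸ haD)
    · intro h
      have hwm : w ∈ G.neighborFinset u₂ := (G.mem_neighborFinset _ _).mpr (h ▸ hz).symm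
      rw [n2, mem_singleton] at hwm
      exact hw.1 (hwm ▸ hcD)
    · intro h
      exact hw.1 (hnaD ((G.mem_neighborFinset _ _).mpr (h ▸ hz).symm))
    · intro h
      exact hw.1 (hncD ((G.mem_neighborFinset _ _).mpr (h ▸ hz).symm))
  have hWadj : ∀ w ∈ I, ∃ z, G.Adj w z := by
    intro w hw
    have : w ≠ u₁ := fun h => ((hImem w).mp hw).1 (h ▸ hu1D)
    exact exists_adj hconn this
  -- degree sum double counting
  have hdegw : ∀ w ∈ I, G.degree w = (T.filter (fun t => G.Adj w t)).card := by
    intro w hw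
    have : G.neighborFinset w = T.filter (fun t => G.Adj w t) := by
      ext z
      rw [mem_filter, G.mem_neighborFinset]
      constructor
      · intro h; exact ⟨hWT w hw z h, h⟩
      · intro h; exact h.2
    rw [show G.degree w = (G.neighborFinset w).card from rfl, this]
  have hsum1 : ∑ w ∈ I, G.degree w = ∑ t ∈ T, (I.filter (fun w => G.Adj w t)).card := by
    calc ∑ w ∈ I, G.degree w = ∑ w ∈ I, (T.filter (fun t => G.Adj w t)).card :=
          Finset.sum_congr rfl hdegw
      _ = ∑ w ∈ I, ∑ t ∈ T, (if G.Adj w t then 1 else 0) := by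
          refine Finset.sum_congr rfl ?_
          intro w _
          exact Finset.card_filter _ _
      _ = ∑ t ∈ T, ∑ w ∈ I, (if G.Adj w t then 1 else 0) := Finset.sum_comm
      _ = ∑ t ∈ T, (I.filter (fun w => G.Adj w t)).card := by
          refine Finset.sum_congr rfl ?_
          intro t _
          exact (Finset.card_filter _ _).symm
  -- slot bounds
  have hslot : ∀ t ∈ T, (I.filter (fun w => G.Adj w t)).card ≤ 3 := by
    intro t ht
    rw [hT, mem_sdiff] at ht
    have htD := ht.1
    have htQ := ht.2
    rw [hQ] at htQ
    simp only [mem_insert, mem_singleton] at htQ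
    push_neg at htQ
    have hsub : I.filter (fun w => G.Adj w t) ⊆ G.neighborFinset t := by
      intro x hx
      rw [mem_filter] at hx
      exact (G.mem_neighborFinset _ _).mpr hx.2.symm
    have hx : ∃ x, x ∈ G.neighborFinset t ∧ x ∈ D := by
      rw [hD, mem_union, mem_insert, mem_insert] at htD
      rcases htD with (h | h) | (h | h)
      · exact absurd h htQ.2.2.1
      · exact ⟨a, (G.mem_neighborFinset _ _).mpr ((G.mem_neighborFinset _ _).mp h).symm, haD⟩
      · exact absurd h htQ.2.2.2
      · exact ⟨c, (G.mem_neighborFinset _ _).mpr ((G.mem_neighborFinset _ _).mp h).symm, hcD⟩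
    obtain ⟨x, hxn, hxD⟩ := hx
    have hxnotI : x ∉ I.filter (fun w => G.Adj w t) := by
      intro hmem
      rw [mem_filter] at hmem
      exact ((hImem x).mp hmem.1).1 hxD
    have := card_le_sub_one hsub hxn hxnotI
    have := hdeg t
    have hh : (G.neighborFinset t).card = G.degree t := rfl
    omega
  have hslotb : (I.filter (fun w => G.Adj w b)).card ≤ 2 := by
    have hanb : a ∈ G.neighborFinset b := (G.mem_neighborFinset _ _).mpr h2.symm
    have hcnb : c ∈ G.neighborFinset b := (G.mem_neighborFinset _ _).mpr h3
    have hsub : I.filter (fun w => G.Adj w b) ⊆ ((G.neighborFinset b).erase a).erase c := by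
      intro x hx
      rw [mem_filter] at hx
      have hxI := hx.1
      have hxD : x ∉ D := ((hImem x).mp hxI).1
      rw [mem_erase, mem_erase]
      exact ⟨fun h => hxD (h ▸ hcD), fun h => hxD (h ▸ haD),
        (G.mem_neighborFinset _ _).mpr hx.2.symm⟩
    have hc1 := card_le_card hsub
    have hcm : c ∈ (G.neighborFinset b).erase a := mem_erase.mpr ⟨Ne.symm hac, hcnb⟩
    have e1 := Finset.card_erase_of_mem hcm
    have e2 := Finset.card_erase_of_mem hanb
    have hpos : 0 < (G.neighborFinset b).card := card_pos.mpr ⟨a, hanb⟩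
    have hpos2 : 0 < ((G.neighborFinset b).erase a).card := card_pos.mpr ⟨c, hcm⟩
    have := hdeg b
    have hh : (G.neighborFinset b).card = G.degree b := rfl
    omega
  have hsumbound : ∑ w ∈ I, G.degree w ≤ (T.card - 1) * 3 + 2 := by
    rw [hsum1]
    have hsplit : ∑ t ∈ T.erase b, (I.filter (fun w => G.Adj w t)).card
        + (I.filter (fun w => G.Adj w b)).card
        = ∑ t ∈ T, (I.filter (fun w => G.Adj w t)).card :=
      Finset.sum_erase_add T (fun t => (I.filter (fun w => G.Adj w t)).card) hbT
    have hrest : ∑ t ∈ T.erase b, (I.filter (fun w => G.Adj w t)).card ≤ (T.card - 1) * 3 := by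
      have := Finset.sum_le_card_nsmul (T.erase b)
        (fun t => (I.filter (fun w => G.Adj w t)).card) 3
        (fun t ht => hslot t (mem_of_mem_erase ht))
      rw [Finset.card_erase_of_mem hbT] at this
      simpa using this
    omega
  -- degree ≥ 1 on I, and the endvertex filter
  set E1 : Finset V := I.filter (fun w => G.degree w = 1) with hE1
  have htwo : 2 * I.card ≤ (∑ w ∈ I, G.degree w) + E1.card := by
    have hpt : ∀ w ∈ I, 2 ≤ G.degree w + (if G.degree w = 1 then 1 else 0) := by
      intro w hw
      have hpos : 1 ≤ G.degree w := by
        obtain ⟨z, hz⟩ := hWadj w hw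
        have hm : z ∈ G.neighborFinset w := (G.mem_neighborFinset _ _).mpr hz
        have : 0 < (G.neighborFinset w).card := card_pos.mpr ⟨z, hm⟩
        have hh : (G.neighborFinset w).card = G.degree w := rfl
        omega
      by_cases h : G.degree w = 1
      · simp [h]
      · simp only [h, if_false]
        omega
    calc 2 * I.card = ∑ _w ∈ I, 2 := by rw [Finset.sum_const, smul_eq_mul, mul_comm]
      _ ≤ ∑ w ∈ I, (G.degree w + (if G.degree w = 1 then 1 else 0)) :=
          Finset.sum_le_sum hpt
      _ = (∑ w ∈ I, G.degree w) + ∑ w ∈ I, (if G.degree w = 1 then 1 else 0) :=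
          Finset.sum_add_distrib
      _ = (∑ w ∈ I, G.degree w) + E1.card := by rw [hE1, Finset.card_filter]
  -- injective map from E1 to T via unique neighbor, using beta
  have hE1T : E1.card ≤ T.card := by
    set f : V → V := fun w => if h : ∃ z, G.Adj w z then h.choose else w with hf
    have hfadj : ∀ w ∈ E1, G.Adj w (f w) := by
      intro w hw
      rw [hE1, mem_filter] at hw
      have hex := hWadj w hw.1
      rw [hf]
      simp only [dif_pos hex]
      exact hex.choose_spec
    have hfmem : ∀ w ∈ E1, f w ∈ T := by
      intro w hw
      have hwI : w ∈ I := (mem_filter.mp hw).1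
      exact hWT w hwI (f w) (hfadj w hw)
    refine card_le_card_of_injOn f hfmem ?_
    intro w hwmem w' hwmem' heq
    by_contra hne
    have hw := mem_filter.mp hwmem
    have hw' := mem_filter.mp hwmem'
    exact beta hconn hdeg hsmall hmin hne hw.2 hw'.2
      (hfadj w hwmem).symm (heq ▸ (hfadj w' hwmem').symm)
  -- final arithmetic
  have hDT : D.card = T.card + 4 := by omega
  have hT5 : T.card ≤ 5 := by omega
  have hbTpos : 1 ≤ T.card := card_pos.mpr ⟨b, hbT⟩
  have hIcard : D.card + I.card ≤ 18 := by omega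
  -- apply contra
  have hnu1c : ¬ G.Adj u₁ c := by
    intro h
    have : c ∈ G.neighborFinset u₁ := (G.mem_neighborFinset _ _).mpr h
    rw [n1, mem_singleton] at this
    exact hac this.symm
  have hnu1u2 : ¬ G.Adj u₁ u₂ := by
    intro h
    have : u₂ ∈ G.neighborFinset u₁ := (G.mem_neighborFinset _ _).mpr h
    rw [n1, mem_singleton] at this
    exact hau2 this.symm
  have hnau2 : ¬ G.Adj a u₂ := by
    intro h
    have : a ∈ G.neighborFinset u₂ := (G.mem_neighborFinset _ _).mpr h.symm
    rw [n2, mem_singleton] at this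
    exact hac this
  have hMIM : IsInducedMatching G {s(u₁, a), s(c, u₂)} :=
    pair_im h1 h4 hnu1c hnu1u2 hnac hnau2 hu1c h12 hac hau2
  have hMne : s(u₁, a) ≠ s(c, u₂) := by
    intro h
    rcases Sym2.eq_iff.mp h with ⟨hh, _⟩ | ⟨hh, _⟩
    · exact hu1c hh
    · exact h12 hh
  have hMcard : ({s(u₁, a), s(c, u₂)} : Finset (Sym2 V)).card = 2 := by
    rw [card_insert_of_notMem (by rw [mem_singleton]; exact hMne), card_singleton]
  refine contra hsmall hmin {s(u₁, a), s(c, u₂)} D ⟨a, haD⟩ hMIM ?_ ?_ I hImem ?_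
  · intro e he x hx
    rcases mem_insert.mp he with rfl | he2
    · rcases Sym2.mem_iff.mp hx with heq | heq <;> rw [heq]
      · exact hu1D
      · exact haD
    · rw [mem_singleton] at he2; subst he2
      rcases Sym2.mem_iff.mp hx with heq | heq <;> rw [heq]
      · exact hcD
      · exact hu2D
  · intro e he x hx z hz
    rcases mem_insert.mp he with rfl | he2
    · rcases Sym2.mem_iff.mp hx with heq | heq <;> rw [heq] at hz
      · rw [adj_eq_of_deg_one d1 h1 hz]
        exact haD
      · exact hnaD ((G.mem_neighborFinset _ _).mpr hz)
    · rw [mem_singleton] at he2; subst he2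
      rcases Sym2.mem_iff.mp hx with heq | heq <;> rw [heq] at hz
      · exact hncD ((G.mem_neighborFinset _ _).mpr hz)
      · rw [adj_eq_of_deg_one d2 h4.symm hz]
        exact hcD
  · rw [hMcard]
    omega

end ClaimWork

/-- Claim about a minimum counterexample to Theorem 1'. -/
theorem claim3_no_two_endvertices_at_distance_four
    {V : Type*} [Fintype V] (G : SimpleGraph V) [DecidableRel G.Adj]
    (hconn : G.Connected) (hdeg : ∀ v, G.degree v ≤ 4)
    (hC25 : ¬ Nonempty (G ≃g C25))
    (hsmall : (strongMatchingNumber G : ℚ) < (Fintype.card V : ℚ) / 9)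
    (hmin : ∀ s : Finset V, s ⊂ Finset.univ →
      ((s.card : ℚ) - (isolatedCount (G.induce (↑s : Set V)) : ℚ)) / 9 ≤
        strongMatchingNumber (G.induce (↑s : Set V))) :
    ∀ u₁ u₂ : V, G.degree u₁ = 1 → G.degree u₂ = 1 → G.dist u₁ u₂ ≠ 4 := by
  classical
  intro u₁ u₂ d1 d2 hdist
  obtain ⟨p, hp⟩ := (hconn u₁ u₂).exists_walk_length_eq_dist
  rw [hdist] at hp
  have hdle : ∀ (w : G.Walk u₁ u₂), (4 : ℕ) ≤ w.length := by
    intro w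
    have := SimpleGraph.dist_le w
    omega
  have h12 : u₁ ≠ u₂ := by
    intro h
    rw [h, SimpleGraph.dist_self] at hdist
    exact absurd hdist.symm (by norm_num)
  cases p with
  | nil => simp at hp
  | cons h1 q1 =>
    rename_i a
    cases q1 with
    | nil => simp at hp
    | cons h2 q2 =>
      rename_i b
      cases q2 with
      | nil => simp at hp
      | cons h3 q3 =>
        rename_i c
        cases q3 with
        | nil => simp at hp
        | cons h4 q4 =>
          rename_i e
          cases q4 with
          | cons h5 q5 => simp [SimpleGraph.Walk.length_cons] at hp
          | nil =>
            have hac : a ≠ c := by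
              intro heq
              have h5 := hdle (SimpleGraph.Walk.cons h1
                (SimpleGraph.Walk.cons (show G.Adj a u₂ by rw [heq]; exact h4)
                  SimpleGraph.Walk.nil))
              simp [SimpleGraph.Walk.length_cons] at h5
            have hnac : ¬ G.Adj a c := by
              intro hadj
              have h5 := hdle (SimpleGraph.Walk.cons h1 (SimpleGraph.Walk.cons hadj
                (SimpleGraph.Walk.cons h4 SimpleGraph.Walk.nil)))
              simp [SimpleGraph.Walk.length_cons] at h5
            have hu1c : u₁ ≠ c := by
              intro heq
              have h5 := hdle (SimpleGraph.Walk.cons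
                (show G.Adj u₁ u₂ by rw [heq]; exact h4) SimpleGraph.Walk.nil)
              simp [SimpleGraph.Walk.length_cons] at h5
            have hau2 : a ≠ u₂ := by
              intro heq
              have h5 := hdle (SimpleGraph.Walk.cons
                (show G.Adj u₁ u₂ by rw [← heq]; exact h1) SimpleGraph.Walk.nil)
              simp [SimpleGraph.Walk.length_cons] at h5
            exact ClaimWork.delta hconn hdeg hsmall hmin d1 d2 h1 h2 h3 h4
              hac hnac h12 hu1c hau2
end

section
/- The strong matching number of C_{2,5} equals 1, and the strong matching number of K_{3,3}^+ equals 1. Moreover C_{2,5} is 4-regular and K_{3,3}^+ has maximum degree 3. -/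
open SimpleGraph

/-- Boolean adjacency of `K_{3,3}^+`: `K_{3,3}` on `Fin 3 ⊕ Fin 3` with the edge between
`inl 0` and `inr 0` subdivided by the new vertex `none`. -/
def K33plusAdj : Option (Fin 3 ⊕ Fin 3) → Option (Fin 3 ⊕ Fin 3) → Bool
  | some (.inl i), some (.inr j) => !(i == 0 && j == 0)
  | some (.inr j), some (.inl i) => !(i == 0 && j == 0)
  | none, some (.inl i) => i == 0
  | some (.inl i), none => i == 0
  | none, some (.inr j) => j == 0
  | some (.inr j), none => j == 0
  | _, _ => false

/-- `K_{3,3}^+`: the graph obtained from `K_{3,3}` by subdividing one edge by a new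
vertex. -/
def K33plus : SimpleGraph (Option (Fin 3 ⊕ Fin 3)) where
  Adj x y := K33plusAdj x y
  symm := ⟨by intro x y; revert x y; decide⟩
  loopless := ⟨by intro x; revert x; decide⟩

instance : DecidableRel K33plus.Adj :=
  fun x y => inferInstanceAs (Decidable (K33plusAdj x y = true))

instance : DecidableRel C25.Adj :=
  fun x y => inferInstanceAs (Decidable (_ ∨ _))


lemma smn_eq_one {V : Type*} [Fintype V] [DecidableEq V] (G : SimpleGraph V)
    (M : Finset (Sym2 V)) (hM : IsInducedMatching G M) (hc : M.card = 1)
    (h : ∀ a b c d : V, G.Adj a b → G.Adj c d →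
      a = c ∨ a = d ∨ b = c ∨ b = d ∨ G.Adj a c ∨ G.Adj a d ∨ G.Adj b c ∨ G.Adj b d) :
    strongMatchingNumber G = 1 := by
  have key : ∀ e ∈ G.edgeSet, ∀ f ∈ G.edgeSet, ∃ x ∈ e, ∃ y ∈ f, x = y ∨ G.Adj x y := by
    intro e
    induction e using Sym2.ind with
    | _ a b =>
      intro he f
      induction f using Sym2.ind with
      | _ c d =>
        intro hf
        rw [SimpleGraph.mem_edgeSet] at he hf
        rcases h a b c d he hf with h' | h' | h' | h' | h' | h' | h' | h'
        · exact ⟨a, by simp, c, by simp, Or.inl h'⟩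
        · exact ⟨a, by simp, d, by simp, Or.inl h'⟩
        · exact ⟨b, by simp, c, by simp, Or.inl h'⟩
        · exact ⟨b, by simp, d, by simp, Or.inl h'⟩
        · exact ⟨a, by simp, c, by simp, Or.inr h'⟩
        · exact ⟨a, by simp, d, by simp, Or.inr h'⟩
        · exact ⟨b, by simp, c, by simp, Or.inr h'⟩
        · exact ⟨b, by simp, d, by simp, Or.inr h'⟩
  have hbound : ∀ n ∈ {n : ℕ | ∃ M : Finset (Sym2 V),
      IsInducedMatching G M ∧ M.card = n}, n ≤ 1 := by
    rintro n ⟨N, ⟨hsub, hind⟩, rfl⟩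
    by_contra hn
    push_neg at hn
    obtain ⟨e, he, f, hf, hef⟩ := Finset.one_lt_card.mp hn
    obtain ⟨a, ha, b, hb, hab⟩ := key e (hsub he) f (hsub hf)
    obtain ⟨hne, hnadj⟩ := hind e he f hf hef a ha b hb
    rcases hab with h' | h' <;> [exact hne h'; exact hnadj h']
  have h1 : (1 : ℕ) ∈ {n : ℕ | ∃ M : Finset (Sym2 V),
      IsInducedMatching G M ∧ M.card = n} := ⟨M, hM, hc⟩
  exact le_antisymm (csSup_le ⟨1, h1⟩ hbound) (le_csSup ⟨1, hbound⟩ h1)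

lemma singleton_matching {V : Type*} (G : SimpleGraph V) (e : Sym2 V)
    (he : e ∈ G.edgeSet) : IsInducedMatching G {e} := by
  constructor
  · intro x hx
    simp only [Finset.coe_singleton, Set.mem_singleton_iff] at hx
    exact hx ▸ he
  · intro a ha b hb hab
    simp only [Finset.mem_singleton] at ha hb
    exact absurd (ha.trans hb.symm) hab

set_option synthInstance.maxSize 5000 in
set_option maxRecDepth 100000 in
/-- `ν_s(C_{2,5}) = ν_s(K_{3,3}^+) = 1`; moreover `C_{2,5}` is 4-regular and `K_{3,3}^+`
has maximum degree 3. -/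
theorem strongMatchingNumber_C25_K33plus :
    strongMatchingNumber C25 = 1 ∧ strongMatchingNumber K33plus = 1 ∧
    (∀ v, C25.degree v = 4) ∧ K33plus.maxDegree = 3 := by
  refine ⟨smn_eq_one C25 {s((0,0),(1,0))} (singleton_matching _ _ (by decide)) rfl
    (by decide), smn_eq_one K33plus {s(some (.inl 1), some (.inr 1))}
    (singleton_matching _ _ (by decide)) rfl (by decide), by decide, by decide⟩
end
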